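/- Every Suslin line contains an uncountable suborder which is order-isomorphic to a lexicographically ordered Suslin tree, i.e., to (S,<_lex) for some Suslin tree (S,<_S) equipped with a lexicographic ordering <_lex. -/

import Mathlib

noncomputable section

open Set

/-- The ordinal `ω₁`. -/
def omega1 : Ordinal := (Cardinal.aleph 1).ord

/-- A set-theoretic tree: a partial order in which the set of predecessors of every
node is well-ordered by the order. -/
def IsSetTree (T : Type) [PartialOrder T] : Prop :=
  ∀ t : T, IsWellOrder {s : T // s < t} (fun a b => (a : T) < (b : T))

/-- The height of a node: the order type of its set of predecessors. -/
noncomputable def nodeHt {T : Type} [PartialOrder T] (hT : IsSetTree T) (t : T) : Ordinal :=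
  @Ordinal.type {s : T // s < t} (fun a b => (a : T) < (b : T)) (hT t)

-- `restr hT t ξ` is the unique `s ≤ t` of height `ξ` (junk value `t` if there is none).
open Classical in
noncomputable def restr {T : Type} [PartialOrder T] (hT : IsSetTree T) (t : T) (ξ : Ordinal) : T :=
  if h : ∃ s : T, s ≤ t ∧ nodeHt hT s = ξ then h.choose else t

/-- Incomparability in the tree order. -/
def Incomp {T : Type} [PartialOrder T] (s t : T) : Prop := ¬ s ≤ t ∧ ¬ t ≤ s

/-- `Δ(s,t)`: the least `α` such that `s↾α ≠ t↾α`. -/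
noncomputable def delta {T : Type} [PartialOrder T] (hT : IsSetTree T) (s t : T) : Ordinal :=
  sInf {α : Ordinal | restr hT s α ≠ restr hT t α}

/-- A family of linear orders on the levels of the tree, coded as a single relation
relating only nodes of the same height. -/
def IsLevelOrderFamily {T : Type} [PartialOrder T] (hT : IsSetTree T) (lo : T → T → Prop) : Prop :=
  (∀ s t, lo s t → nodeHt hT s = nodeHt hT t) ∧
  (∀ t, ¬ lo t t) ∧
  (∀ s t u, lo s t → lo t u → lo s u) ∧
  (∀ s t, s ≠ t → nodeHt hT s = nodeHt hT t → lo s t ∨ lo t s)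

/-- The lexicographic ordering induced by the level orders `lo`:
`t <lex s` iff `t <_T s`, or `t ⊥ s` and `t↾Δ(t,s) ◁ s↾Δ(t,s)`. -/
def lexLT {T : Type} [PartialOrder T] (hT : IsSetTree T) (lo : T → T → Prop) (t s : T) : Prop :=
  t < s ∨ (Incomp t s ∧ lo (restr hT t (delta hT t s)) (restr hT s (delta hT t s)))

/-- An `ω₁`-tree: height `ω₁` and all levels countable. -/
def IsOmega1Tree {T : Type} [PartialOrder T] (hT : IsSetTree T) : Prop :=
  (∀ t : T, nodeHt hT t < omega1) ∧
  (∀ α : Ordinal, α < omega1 → ∃ t : T, nodeHt hT t = α) ∧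
  (∀ α : Ordinal, {t : T | nodeHt hT t = α}.Countable)

def NoUncountableChain (T : Type) [PartialOrder T] : Prop :=
  ∀ C : Set T, IsChain (· ≤ ·) C → C.Countable

def NoUncountableAntichain (T : Type) [PartialOrder T] : Prop :=
  ∀ A : Set T, (∀ s ∈ A, ∀ t ∈ A, s ≠ t → Incomp s t) → A.Countable

/-- An Aronszajn tree: an `ω₁`-tree with no uncountable chains. -/
def IsAronszajnTree {T : Type} [PartialOrder T] (hT : IsSetTree T) : Prop :=
  IsOmega1Tree hT ∧ NoUncountableChain T

/-- A Suslin tree: an `ω₁`-tree with no uncountable chains and no uncountable antichains. -/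
def IsSuslinTree {T : Type} [PartialOrder T] (hT : IsSetTree T) : Prop :=
  IsOmega1Tree hT ∧ NoUncountableChain T ∧ NoUncountableAntichain T

/-- A family of pairs is pairwise disjoint if distinct members are disjoint as sets. -/
def PairwiseDisjointPairs {T : Type} (A : Set (T × T)) : Prop :=
  ∀ a ∈ A, ∀ b ∈ A, a ≠ b → a.1 ≠ b.1 ∧ a.1 ≠ b.2 ∧ a.2 ≠ b.1 ∧ a.2 ≠ b.2

/-- A family of pairs is separated if some `c` lies strictly between the coordinates
of every member. -/
def SeparatedPairs {T : Type} (lt : T → T → Prop) (A : Set (T × T)) : Prop :=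
  ∃ c : T, ∀ a ∈ A, lt a.1 c ∧ lt c a.2

/-- `tpPerp hT lo a b t`: the pair `(a,b)` realizes the type `t` in the lexicographic
order and moreover `a i ⊥ b i` in the tree order, for `i < 2`. (`true` codes `<`.) -/
def tpPerp {T : Type} [PartialOrder T] (hT : IsSetTree T) (lo : T → T → Prop)
    (a b : T × T) (t : Fin 2 → Bool) : Prop :=
  Incomp a.1 b.1 ∧ Incomp a.2 b.2 ∧
  (if t 0 then lexLT hT lo a.1 b.1 else lexLT hT lo b.1 a.1) ∧
  (if t 1 then lexLT hT lo a.2 b.2 else lexLT hT lo b.2 a.2)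

/-- The weakly bi-entangled property of a lexicographically ordered tree. -/
def WeaklyBiEntangled {T : Type} [PartialOrder T] (hT : IsSetTree T) (lo : T → T → Prop) : Prop :=
  ∀ A : Set (T × T), ¬ A.Countable →
    (∀ a ∈ A, lexLT hT lo a.1 a.2) →
    PairwiseDisjointPairs A → SeparatedPairs (lexLT hT lo) A →
    ∃ ξ₀ : Ordinal, ξ₀ < omega1 ∧
      ∀ b ∈ A, ξ₀ ≤ nodeHt hT b.1 → ξ₀ ≤ nodeHt hT b.2 →
        ∀ t : Fin 2 → Bool,
          ∃ a ∈ A, nodeHt hT a.1 < ξ₀ ∧ nodeHt hT a.2 < ξ₀ ∧ tpPerp hT lo a b t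

/-- A normal family of pairs. -/
def NormalFamily {T : Type} [PartialOrder T] (hT : IsSetTree T) (lo : T → T → Prop)
    (B : Set (T × T)) : Prop :=
  ¬ B.Countable ∧
  (∀ b ∈ B, lexLT hT lo b.1 b.2) ∧
  PairwiseDisjointPairs B ∧
  (∀ b ∈ B, nodeHt hT b.1 = nodeHt hT b.2) ∧
  BddAbove {α : Ordinal | ∃ b ∈ B, α = delta hT b.1 b.2} ∧
  sSup {α : Ordinal | ∃ b ∈ B, α = delta hT b.1 b.2} <
    sInf {α : Ordinal | ∃ b ∈ B, α = nodeHt hT b.1} ∧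
  {α : Ordinal | ∃ b ∈ B, α = nodeHt hT b.1} =
    {α : Ordinal | sInf {α : Ordinal | ∃ b ∈ B, α = nodeHt hT b.1} ≤ α ∧ α < omega1}


/-- A linear order is c.c.c. if every family of pairwise disjoint nonempty open
intervals is countable. -/
def CCCOrder (L : Type) [LinearOrder L] : Prop :=
  ∀ F : Set (Set L),
    (∀ s ∈ F, (∃ a b : L, s = Set.Ioo a b) ∧ s.Nonempty) →
    F.Pairwise Disjoint → F.Countable

/-- A linear order is topologically separable if some countable set meets every
nonempty open interval. -/
def TopSeparable (L : Type) [LinearOrder L] : Prop :=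
  ∃ D : Set L, D.Countable ∧
    ∀ a b : L, (Set.Ioo a b).Nonempty → (D ∩ Set.Ioo a b).Nonempty

/-! ### Auxiliary: generic lemmas about set-theoretic trees -/

section GenericTree

variable {T : Type} [PartialOrder T]

lemma pred_comparable (hT : IsSetTree T) {s u t : T} (hs : s < t) (hu : u < t) :
    s < u ∨ s = u ∨ u < s := by
  haveI := hT t
  rcases @trichotomous _ (fun a b : {x : T // x < t} => (a : T) < (b : T)) _ ⟨s, hs⟩ ⟨u, hu⟩ with
    h | h | h
  · exact Or.inl h
  · exact Or.inr (Or.inl (congrArg Subtype.val h))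
  · exact Or.inr (Or.inr h)

lemma nodeHt_eq_typein (hT : IsSetTree T) {s t : T} (hst : s < t) :
    nodeHt hT s = @Ordinal.typein {x : T // x < t} (fun a b => (a : T) < (b : T)) (hT t)
      ⟨s, hst⟩ := by
  haveI := hT t
  haveI := hT s
  rw [← Ordinal.type_subrel]
  refine Ordinal.type_eq.2 ⟨?_⟩
  exact ⟨⟨fun u => ⟨⟨u.1, lt_trans u.2 hst⟩, u.2⟩, fun v => ⟨v.1.1, v.2⟩,
    fun u => rfl, fun v => rfl⟩, Iff.rfl⟩

lemma nodeHt_lt_of_lt (hT : IsSetTree T) {s t : T} (hst : s < t) :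
    nodeHt hT s < nodeHt hT t := by
  haveI := hT t
  rw [nodeHt_eq_typein hT hst]
  exact Ordinal.typein_lt_type _ _

lemma exists_nodeHt_eq_of_lt (hT : IsSetTree T) {t : T} {ξ : Ordinal} (hξ : ξ < nodeHt hT t) :
    ∃ s : T, s < t ∧ nodeHt hT s = ξ := by
  haveI := hT t
  have hξ' : ξ < Ordinal.type (fun a b : {x : T // x < t} => (a : T) < (b : T)) := hξ
  set u := Ordinal.enum (fun a b : {x : T // x < t} => (a : T) < (b : T)) ⟨ξ, hξ'⟩ with hu
  refine ⟨u.1, u.2, ?_⟩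
  rw [nodeHt_eq_typein hT u.2]
  have h2 : (⟨u.1, u.2⟩ : {x : T // x < t}) = u := rfl
  rw [h2, hu]
  exact Ordinal.typein_enum _ _

lemma nodeHt_unique (hT : IsSetTree T) {s s' t : T} (h : s ≤ t) (h' : s' ≤ t)
    (he : nodeHt hT s = nodeHt hT s') : s = s' := by
  by_contra hne
  rcases h.lt_or_eq with h1 | rfl
  · rcases h'.lt_or_eq with h2 | rfl
    · rcases pred_comparable hT h1 h2 with hc | hc | hc
      · exact absurd he (ne_of_lt (nodeHt_lt_of_lt hT hc))
      · exact hne hc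
      · exact absurd he.symm (ne_of_lt (nodeHt_lt_of_lt hT hc))
    · exact absurd he (ne_of_lt (nodeHt_lt_of_lt hT h1))
  · rcases h'.lt_or_eq with h2 | rfl
    · exact absurd he.symm (ne_of_lt (nodeHt_lt_of_lt hT h2))
    · exact hne rfl

lemma restr_spec (hT : IsSetTree T) {t : T} {ξ : Ordinal} (hξ : ξ ≤ nodeHt hT t) :
    restr hT t ξ ≤ t ∧ nodeHt hT (restr hT t ξ) = ξ := by
  have hex : ∃ s : T, s ≤ t ∧ nodeHt hT s = ξ := by
    rcases hξ.lt_or_eq with h | h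
    · obtain ⟨s, hs, hes⟩ := exists_nodeHt_eq_of_lt hT h
      exact ⟨s, le_of_lt hs, hes⟩
    · exact ⟨t, le_refl t, h.symm⟩
  rw [restr, dif_pos hex]
  exact hex.choose_spec

lemma delta_min_mem (hT : IsSetTree T) {s t : T} (hinc : Incomp s t) :
    min (nodeHt hT s) (nodeHt hT t) ∈ {α : Ordinal | restr hT s α ≠ restr hT t α} := by
  have key : ∀ s t : T, Incomp s t → nodeHt hT s ≤ nodeHt hT t →
      restr hT s (nodeHt hT s) ≠ restr hT t (nodeHt hT s) := by
    intro s t hinc hle heq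
    have h1 := restr_spec hT (le_refl (nodeHt hT s))
    have hs : restr hT s (nodeHt hT s) = s :=
      nodeHt_unique hT h1.1 (le_refl s) h1.2
    have h2 := restr_spec hT (t := t) hle
    rw [hs] at heq
    exact hinc.1 (heq ▸ h2.1)
  rcases le_total (nodeHt hT s) (nodeHt hT t) with h | h
  · rw [min_eq_left h]
    exact key s t hinc h
  · rw [min_eq_right h]
    exact fun heq => key t s ⟨hinc.2, hinc.1⟩ h heq.symm

lemma delta_le_left (hT : IsSetTree T) {s t : T} (hinc : Incomp s t) :
    delta hT s t ≤ nodeHt hT s :=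
  le_trans (csInf_le' (delta_min_mem hT hinc)) (min_le_left _ _)

lemma delta_le_right (hT : IsSetTree T) {s t : T} (hinc : Incomp s t) :
    delta hT s t ≤ nodeHt hT t :=
  le_trans (csInf_le' (delta_min_mem hT hinc)) (min_le_right _ _)

lemma delta_restr_ne (hT : IsSetTree T) {s t : T} (hinc : Incomp s t) :
    restr hT s (delta hT s t) ≠ restr hT t (delta hT s t) :=
  csInf_mem (⟨_, delta_min_mem hT hinc⟩ : {α : Ordinal | restr hT s α ≠ restr hT t α}.Nonempty)

end GenericTree

/-! ### Auxiliary: construction of the tree from a Suslin line -/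

section LineLemmas

variable {L : Type} [LinearOrder L]

/-- Points that form a singleton open interval. -/
def IsoPts (L : Type) [LinearOrder L] : Set L := {x : L | ∃ a b : L, Set.Ioo a b = {x}}

lemma isoPts_countable (hccc : CCCOrder L) : (IsoPts L).Countable := by
  have hF := hccc ((fun x : L => ({x} : Set L)) '' IsoPts L) ?_ ?_
  · exact Set.countable_of_injective_of_countable_image
      (Set.singleton_injective.injOn) hF
  · rintro s ⟨x, hx, rfl⟩
    obtain ⟨a, b, hab⟩ := hx
    exact ⟨⟨a, b, hab.symm⟩, x, rfl⟩
  · rintro s ⟨x, _, rfl⟩ t ⟨y, _, rfl⟩ hne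
    have : x ≠ y := fun h => hne (by rw [h])
    simpa using this

lemma nonempty_of_nsep (hnsep : ¬ TopSeparable L) : Nonempty L := by
  by_contra h
  exact hnsep ⟨∅, Set.countable_empty, fun a _ _ => absurd ⟨a⟩ h⟩

lemma supply (hccc : CCCOrder L) (hnsep : ¬ TopSeparable L) (D : Set L) (hD : D.Countable) :
    ∃ z : L × L × L, z.1 < z.2.1 ∧ z.2.1 < z.2.2 ∧
      Set.Ioo z.1 z.2.2 ∩ D = ∅ ∧ (Set.Ioo z.2.1 z.2.2).Nonempty := by
  have hDI : (D ∪ IsoPts L).Countable := hD.union (isoPts_countable hccc)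
  rw [TopSeparable] at hnsep
  push_neg at hnsep
  obtain ⟨a, b, hne, hmeet⟩ := hnsep (D ∪ IsoPts L) hDI
  have hdisj : (D ∪ IsoPts L) ∩ Set.Ioo a b = ∅ :=
    hmeet
  obtain ⟨x, hx⟩ := hne
  have hnotin : ∀ y ∈ Set.Ioo a b, y ∉ D ∪ IsoPts L := by
    intro y hy hmem
    exact absurd (Set.mem_inter hmem hy) (by rw [hdisj]; exact id)
  have hxI : x ∉ IsoPts L := fun h => hnotin x hx (Or.inr h)
  have hex : ∃ y ∈ Set.Ioo a b, y ≠ x := by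
    by_contra h
    push_neg at h
    exact hxI ⟨a, b, Set.Subset.antisymm (fun y hy => h y hy) (by rintro y rfl; exact hx)⟩
  obtain ⟨y, hy, hyx⟩ := hex
  have hIooD : ∀ u v : L, Set.Ioo u v ⊆ Set.Ioo a b → Set.Ioo u v ∩ D = ∅ := by
    intro u v hsub
    rw [Set.eq_empty_iff_forall_notMem]
    rintro w ⟨hw1, hw2⟩
    exact hnotin w (hsub hw1) (Or.inl hw2)
  rcases lt_or_gt_of_ne hyx with h | h
  · exact ⟨(a, y, b), hy.1, hy.2, hIooD a b (fun _ h => h), ⟨x, h, hx.2⟩⟩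
  · exact ⟨(a, x, b), hx.1, hx.2, hIooD a b (fun _ h => h), ⟨y, h, hy.2⟩⟩


/-- The order type of an element of `δ.ToType` (with explicit well-order instance). -/
noncomputable def otyp {δ : Ordinal.{0}} (μ : δ.ToType) : Ordinal.{0} :=
  @Ordinal.typein δ.ToType (· < ·) isWellOrder_lt μ

lemma otyp_lt {δ : Ordinal.{0}} (μ : δ.ToType) : otyp μ < δ :=
  Ordinal.typein_lt_self μ

/-- The element of `δ.ToType` with a given order type. -/
noncomputable def oenum {δ : Ordinal.{0}} (μ' : Ordinal.{0}) (h : μ' < δ) : δ.ToType :=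
  (@Ordinal.enum δ.ToType (· < ·) isWellOrder_lt)
    ⟨μ', lt_of_lt_of_eq h (Ordinal.type_toType δ).symm⟩

lemma otyp_oenum {δ : Ordinal.{0}} (μ' : Ordinal.{0}) (h : μ' < δ) : otyp (oenum μ' h) = μ' :=
  @Ordinal.typein_enum δ.ToType (· < ·) isWellOrder_lt μ'
    (lt_of_lt_of_eq h (Ordinal.type_toType δ).symm)

lemma otyp_inj {δ : Ordinal.{0}} {μ ν : δ.ToType} (h : otyp μ = otyp ν) : μ = ν :=
  (@Ordinal.typein_injective δ.ToType (· < ·) isWellOrder_lt) h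

lemma otyp_lt_otyp {δ : Ordinal.{0}} {μ ν : δ.ToType} : otyp μ < otyp ν ↔ μ < ν :=
  @Ordinal.typein_lt_typein δ.ToType (· < ·) isWellOrder_lt μ ν

lemma union_triple_countable {δ : Ordinal.{0}} (h : δ < omega1) (g : δ.ToType → L × L × L) :
    (⋃ μ : δ.ToType, ({(g μ).1, (g μ).2.1, (g μ).2.2} : Set L)).Countable := by
  haveI : Countable δ.ToType := by
    rw [← Cardinal.mk_le_aleph0_iff, Cardinal.mk_toType]
    have := Cardinal.lt_ord.1 h
    rwa [← Cardinal.succ_aleph0, Order.lt_succ_iff] at this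
  exact Set.countable_iUnion fun μ =>
    (((Set.countable_singleton _).insert _).insert _)

variable (hccc : CCCOrder L) (hnsep : ¬ TopSeparable L)

/-- Body of the recursion producing intervals with chosen points. -/
noncomputable def FFb : ∀ δ : Ordinal.{0}, (∀ μ : Ordinal, μ < δ → L × L × L) → L × L × L :=
  fun δ IH =>
    if h : δ < omega1 then
      (supply hccc hnsep _
        (union_triple_countable h
          (fun μ : δ.ToType => IH (otyp μ) (Ordinal.typein_lt_self μ)))).choose
    else
      (fun x => (x, x, x)) (Classical.choice (nonempty_of_nsep hnsep))

/-- The transfinite recursion assigning to each countable ordinal an interval and a point. -/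
noncomputable def FF : Ordinal.{0} → L × L × L :=
  Ordinal.lt_wf.fix (FFb hccc hnsep)

lemma FF_def (δ : Ordinal.{0}) :
    FF hccc hnsep δ = FFb hccc hnsep δ (fun μ _ => FF hccc hnsep μ) :=
  WellFounded.fix_eq _ _ _

lemma FF_spec {δ : Ordinal.{0}} (h : δ < omega1) :
    (FF hccc hnsep δ).1 < (FF hccc hnsep δ).2.1 ∧
    (FF hccc hnsep δ).2.1 < (FF hccc hnsep δ).2.2 ∧
    Set.Ioo (FF hccc hnsep δ).1 (FF hccc hnsep δ).2.2 ∩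
      (⋃ μ : δ.ToType, ({(FF hccc hnsep (otyp μ)).1,
        (FF hccc hnsep (otyp μ)).2.1,
        (FF hccc hnsep (otyp μ)).2.2} : Set L)) = ∅ ∧
    (Set.Ioo (FF hccc hnsep δ).2.1 (FF hccc hnsep δ).2.2).Nonempty := by
  rw [FF_def hccc hnsep δ]
  simp only [FFb]
  rw [dif_pos h]
  exact (supply hccc hnsep _
    (union_triple_countable h (fun μ => FF hccc hnsep (otyp μ)))).choose_spec

lemma FF_avoid {δ μ : Ordinal.{0}} (h : δ < omega1) (hμ : μ < δ) :
    (FF hccc hnsep μ).1 ∉ Set.Ioo (FF hccc hnsep δ).1 (FF hccc hnsep δ).2.2 ∧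
    (FF hccc hnsep μ).2.1 ∉ Set.Ioo (FF hccc hnsep δ).1 (FF hccc hnsep δ).2.2 ∧
    (FF hccc hnsep μ).2.2 ∉ Set.Ioo (FF hccc hnsep δ).1 (FF hccc hnsep δ).2.2 := by
  have hspec := (FF_spec hccc hnsep h).2.2.1
  set ν : δ.ToType := oenum μ hμ with hν
  have hty : otyp ν = μ := otyp_oenum μ hμ
  have hmem : ∀ x : L, x ∈ ({(FF hccc hnsep μ).1, (FF hccc hnsep μ).2.1,
      (FF hccc hnsep μ).2.2} : Set L) →
      x ∉ Set.Ioo (FF hccc hnsep δ).1 (FF hccc hnsep δ).2.2 := by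
    intro x hx hxIoo
    have hxU : x ∈ ⋃ ν' : δ.ToType, ({(FF hccc hnsep (otyp ν')).1,
        (FF hccc hnsep (otyp ν')).2.1,
        (FF hccc hnsep (otyp ν')).2.2} : Set L) := by
      refine Set.mem_iUnion.2 ⟨ν, ?_⟩
      rwa [hty]
    have : x ∈ (∅ : Set L) := hspec ▸ Set.mem_inter hxIoo hxU
    exact this
  exact ⟨hmem _ (Set.mem_insert _ _),
    hmem _ (Set.mem_insert_of_mem _ (Set.mem_insert _ _)),
    hmem _ (Set.mem_insert_of_mem _ (Set.mem_insert_of_mem _ rfl))⟩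

end LineLemmas

/-! ### The carrier of the tree and the tree order -/

section TreeOrder

/-- The carrier of the Suslin tree: a type of cardinality `ℵ₁`. -/
def Carrier : Type := (omega1 : Ordinal.{0}).ToType

noncomputable def idx (x : Carrier) : Ordinal.{0} := otyp (δ := omega1) x

lemma idx_lt_omega1 (x : Carrier) : idx x < omega1 := otyp_lt _

lemma idx_injective : Function.Injective idx := fun _ _ h => otyp_inj h

lemma idx_surj {o : Ordinal.{0}} (h : o < omega1) : ∃ x : Carrier, idx x = o :=
  ⟨oenum o h, otyp_oenum o h⟩

lemma mk_carrier : Cardinal.mk Carrier = Cardinal.aleph 1 := by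
  have h1 : Cardinal.mk Carrier = (omega1 : Ordinal.{0}).card := Cardinal.mk_toType _
  rw [h1, show (omega1 : Ordinal.{0}) = (Cardinal.aleph 1).ord from rfl, Cardinal.card_ord]

lemma carrier_uncountable : ¬ (Set.univ : Set Carrier).Countable := by
  intro h
  rw [Cardinal.countable_iff_lt_aleph_one, Cardinal.mk_univ, mk_carrier] at h
  exact lt_irrefl _ h

lemma three_mul_add_lt {o : Ordinal.{0}} (h : o < omega1) : 3 * o + 2 < omega1 := by
  have hcard : o.card ≤ Cardinal.aleph0 := by
    have h2 := Cardinal.lt_ord.1 h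
    rwa [← Cardinal.succ_aleph0, Order.lt_succ_iff] at h2
  rw [show (omega1 : Ordinal.{0}) = (Cardinal.aleph 1).ord from rfl, Cardinal.lt_ord,
    Ordinal.card_add, Ordinal.card_mul]
  refine lt_of_le_of_lt ?_ Cardinal.aleph0_lt_aleph_one
  have h3 : (3 : Ordinal.{0}).card ≤ Cardinal.aleph0 := by
    simp [Ordinal.card_ofNat]
  have h2 : (2 : Ordinal.{0}).card ≤ Cardinal.aleph0 := by
    simp [Ordinal.card_ofNat]
  calc (3 : Ordinal.{0}).card * o.card + (2 : Ordinal.{0}).card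
      ≤ Cardinal.aleph0 * Cardinal.aleph0 + Cardinal.aleph0 :=
        add_le_add (mul_le_mul' h3 hcard) h2
    _ = Cardinal.aleph0 := by rw [Cardinal.aleph0_mul_aleph0, Cardinal.aleph0_add_aleph0]

variable {L : Type} [LinearOrder L]

lemma wellOrdered_countable (hccc : CCCOrder L) (X : Set L)
    (hwf : WellFounded ((· < ·) : X → X → Prop)) : X.Countable := by
  by_contra hunc
  haveI : WellFoundedLT X := ⟨hwf⟩
  have hX1 : Cardinal.aleph 1 ≤ Cardinal.mk X := by
    rw [Cardinal.countable_iff_lt_aleph_one] at hunc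
    exact not_lt.1 hunc
  haveI : IsWellOrder X ((· < ·) : X → X → Prop) := isWellOrder_lt
  have htype : omega1 ≤ Ordinal.type ((· < ·) : X → X → Prop) := by
    rw [show (omega1 : Ordinal.{0}) = (Cardinal.aleph 1).ord from rfl, Cardinal.ord_le,
      Ordinal.card_type]
    exact hX1
  have hidx2 : ∀ x : Carrier, 3 * idx x + 2 < Ordinal.type ((· < ·) : X → X → Prop) :=
    fun x => lt_of_lt_of_le (three_mul_add_lt (idx_lt_omega1 x)) htype
  have hidx0 : ∀ x : Carrier, 3 * idx x < Ordinal.type ((· < ·) : X → X → Prop) :=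
    fun x => lt_of_le_of_lt (le_self_add) (hidx2 x)
  have hidx1 : ∀ x : Carrier, 3 * idx x + 1 < Ordinal.type ((· < ·) : X → X → Prop) :=
    fun x => lt_of_le_of_lt (add_le_add_right one_le_two _) (hidx2 x)
  set e : ∀ o : Ordinal.{0}, o < Ordinal.type ((· < ·) : X → X → Prop) → X :=
    fun o ho => Ordinal.enum ((· < ·) : X → X → Prop) ⟨o, ho⟩ with he
  have emono : ∀ (o o') (ho : o < _) (ho' : o' < _), o < o' →
      ((e o ho : X) : L) < ((e o' ho' : X) : L) := by
    intro o o' ho ho' hlt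
    have : (e o ho) < (e o' ho') := by
      rw [he]
      exact Ordinal.enum_lt_enum.2 (Subtype.mk_lt_mk.2 hlt)
    exact this
  set g : Carrier → Set L := fun x =>
    Set.Ioo ((e (3 * idx x) (hidx0 x) : X) : L) ((e (3 * idx x + 2) (hidx2 x) : X) : L) with hg
  have h01 : ∀ o : Ordinal.{0}, o < o + 1 := fun o => by
    rw [Ordinal.add_one_eq_succ]
    exact Order.lt_succ o
  have gne : ∀ x : Carrier, (g x).Nonempty := by
    intro x
    exact ⟨((e (3 * idx x + 1) (hidx1 x) : X) : L),
      emono _ _ (hidx0 x) (hidx1 x) (h01 _),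
      emono _ _ (hidx1 x) (hidx2 x) (add_lt_add_right one_lt_two _)⟩
  have gdisj : ∀ x y : Carrier, idx x < idx y → Disjoint (g x) (g y) := by
    intro x y hxy
    rw [Set.disjoint_left]
    intro z hzx hzy
    have h1 : 3 * idx x + 2 < 3 * idx y := by
      have : 3 * idx x + 2 < 3 * (idx x + 1) := by
        rw [mul_add_one]
        exact add_lt_add_right (by exact_mod_cast (by norm_num : (2:ℕ) < 3)) _
      refine lt_of_lt_of_le this (mul_le_mul_right ?_ 3)
      rwa [Ordinal.add_one_eq_succ, Order.succ_le_iff]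
    exact absurd (lt_trans hzx.2 (lt_trans (emono _ _ (hidx2 x) (hidx0 y) h1) hzy.1)) (lt_irrefl z)
  have ginj : Function.Injective g := by
    intro x y hxy
    by_contra hne
    have hne' : idx x ≠ idx y := fun h => hne (idx_injective h)
    obtain ⟨w, hw⟩ := gne x
    rcases lt_or_gt_of_ne hne' with h | h
    · exact Set.disjoint_left.1 (gdisj x y h) hw (hxy ▸ hw)
    · exact Set.disjoint_left.1 (gdisj y x h) (hxy ▸ hw) hw
  have hcnt : (Set.range g).Countable := by
    apply hccc
    · rintro s ⟨x, rfl⟩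
      exact ⟨⟨_, _, rfl⟩, gne x⟩
    · rintro s ⟨x, rfl⟩ t ⟨y, rfl⟩ hne
      have hne' : idx x ≠ idx y := fun h => hne (by rw [idx_injective h])
      rcases lt_or_gt_of_ne hne' with h | h
      · exact gdisj x y h
      · exact (gdisj y x h).symm
  have : Cardinal.aleph 1 ≤ Cardinal.aleph0 := by
    calc Cardinal.aleph 1 = Cardinal.mk Carrier := mk_carrier.symm
      _ = Cardinal.mk (Set.range g) := (Cardinal.mk_range_eq g ginj).symm
      _ ≤ Cardinal.aleph0 := hcnt.le_aleph0
  exact absurd this (not_le.2 Cardinal.aleph0_lt_aleph_one)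

variable (hccc : CCCOrder L) (hnsep : ¬ TopSeparable L)

noncomputable def aP (x : Carrier) : L := (FF hccc hnsep (idx x)).1
noncomputable def pP (x : Carrier) : L := (FF hccc hnsep (idx x)).2.1
noncomputable def bP (x : Carrier) : L := (FF hccc hnsep (idx x)).2.2

/-- The tree order: `x < y` iff `x` comes earlier and the interval of `y` is contained in
the right part of the interval of `x`. -/
def treeLT (x y : Carrier) : Prop :=
  idx x < idx y ∧
    Set.Ioo (aP hccc hnsep y) (bP hccc hnsep y) ⊆
      Set.Ioo (pP hccc hnsep x) (bP hccc hnsep x)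

lemma aP_lt_pP (x : Carrier) : aP hccc hnsep x < pP hccc hnsep x :=
  (FF_spec hccc hnsep (idx_lt_omega1 x)).1

lemma pP_lt_bP (x : Carrier) : pP hccc hnsep x < bP hccc hnsep x :=
  (FF_spec hccc hnsep (idx_lt_omega1 x)).2.1

lemma pP_mem (x : Carrier) : pP hccc hnsep x ∈ Set.Ioo (aP hccc hnsep x) (bP hccc hnsep x) :=
  ⟨aP_lt_pP hccc hnsep x, pP_lt_bP hccc hnsep x⟩

lemma right_nonempty (x : Carrier) : (Set.Ioo (pP hccc hnsep x) (bP hccc hnsep x)).Nonempty :=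
  (FF_spec hccc hnsep (idx_lt_omega1 x)).2.2.2

lemma avoid {x y : Carrier} (h : idx x < idx y) :
    aP hccc hnsep x ∉ Set.Ioo (aP hccc hnsep y) (bP hccc hnsep y) ∧
    pP hccc hnsep x ∉ Set.Ioo (aP hccc hnsep y) (bP hccc hnsep y) ∧
    bP hccc hnsep x ∉ Set.Ioo (aP hccc hnsep y) (bP hccc hnsep y) :=
  FF_avoid hccc hnsep (idx_lt_omega1 y) h

lemma nested {x y : Carrier} (h : idx x < idx y)
    (hne : (Set.Ioo (aP hccc hnsep y) (bP hccc hnsep y) ∩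
      Set.Ioo (aP hccc hnsep x) (bP hccc hnsep x)).Nonempty) :
    Set.Ioo (aP hccc hnsep y) (bP hccc hnsep y) ⊆
      Set.Ioo (aP hccc hnsep x) (bP hccc hnsep x) := by
  obtain ⟨w, hwY, hwX⟩ := hne
  intro z hz
  constructor
  · by_contra hza
    push_neg at hza
    exact (avoid hccc hnsep h).1
      ⟨lt_of_lt_of_le hz.1 hza, lt_trans hwX.1 hwY.2⟩
  · by_contra hzb
    push_neg at hzb
    exact (avoid hccc hnsep h).2.2
      ⟨lt_trans hwY.1 hwX.2, lt_of_le_of_lt hzb hz.2⟩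

lemma side {x y : Carrier} (h : idx x < idx y)
    (hsub : Set.Ioo (aP hccc hnsep y) (bP hccc hnsep y) ⊆
      Set.Ioo (aP hccc hnsep x) (bP hccc hnsep x)) :
    Set.Ioo (aP hccc hnsep y) (bP hccc hnsep y) ⊆
      Set.Ioo (aP hccc hnsep x) (pP hccc hnsep x) ∨
    Set.Ioo (aP hccc hnsep y) (bP hccc hnsep y) ⊆
      Set.Ioo (pP hccc hnsep x) (bP hccc hnsep x) := by
  have hpx : pP hccc hnsep x ∉ Set.Ioo (aP hccc hnsep y) (bP hccc hnsep y) :=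
    (avoid hccc hnsep h).2.1
  have hpy := pP_mem hccc hnsep y
  have hne : pP hccc hnsep y ≠ pP hccc hnsep x := fun he => hpx (he ▸ hpy)
  rcases lt_or_gt_of_ne hne with hlt | hgt
  · left
    intro z hz
    refine ⟨(hsub hz).1, ?_⟩
    by_contra hge
    push_neg at hge
    exact hpx ⟨lt_trans hpy.1 hlt, lt_of_le_of_lt hge hz.2⟩
  · right
    intro z hz
    refine ⟨?_, (hsub hz).2⟩
    by_contra hge
    push_neg at hge
    exact hpx ⟨lt_of_lt_of_le hz.1 hge, lt_trans hgt hpy.2⟩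

lemma treeLT_trans {x y z : Carrier} (h1 : treeLT hccc hnsep x y) (h2 : treeLT hccc hnsep y z) :
    treeLT hccc hnsep x z := by
  refine ⟨lt_trans h1.1 h2.1, fun w hw => h1.2 ?_⟩
  have := h2.2 hw
  exact ⟨lt_trans (aP_lt_pP hccc hnsep y) this.1, this.2⟩

lemma treeLT_pP_lt {x y : Carrier} (h : treeLT hccc hnsep x y) :
    pP hccc hnsep x < pP hccc hnsep y :=
  (h.2 (pP_mem hccc hnsep y)).1

lemma pred_lin {x y z : Carrier} (h1 : treeLT hccc hnsep x z) (h2 : treeLT hccc hnsep y z)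
    (hxy : idx x < idx y) : treeLT hccc hnsep x y := by
  refine ⟨hxy, ?_⟩
  have hpz_y := h2.2 (pP_mem hccc hnsep z)
  have hpz_x := h1.2 (pP_mem hccc hnsep z)
  have hIzy : pP hccc hnsep z ∈ Set.Ioo (aP hccc hnsep y) (bP hccc hnsep y) :=
    ⟨lt_trans (aP_lt_pP hccc hnsep y) hpz_y.1, hpz_y.2⟩
  have hIzx : pP hccc hnsep z ∈ Set.Ioo (aP hccc hnsep x) (bP hccc hnsep x) :=
    ⟨lt_trans (aP_lt_pP hccc hnsep x) hpz_x.1, hpz_x.2⟩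
  have hsub := nested hccc hnsep hxy ⟨pP hccc hnsep z, hIzy, hIzx⟩
  rcases side hccc hnsep hxy hsub with hl | hr
  · exact absurd (hl hIzy).2 (not_lt.2 (le_of_lt hpz_x.1))
  · exact hr

lemma pP_inj {x y : Carrier} (h : pP hccc hnsep x = pP hccc hnsep y) : x = y := by
  rcases lt_trichotomy (idx x) (idx y) with hlt | heq | hgt
  · exact absurd (h ▸ pP_mem hccc hnsep y) ((avoid hccc hnsep hlt).2.1)
  · exact idx_injective heq
  · exact absurd (h ▸ pP_mem hccc hnsep x) ((avoid hccc hnsep hgt).2.1)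

lemma half_disjoint {x y : Carrier} (hxy : idx x < idx y) (hnc : ¬ treeLT hccc hnsep x y) :
    Disjoint (Set.Ioo (pP hccc hnsep x) (bP hccc hnsep x))
      (Set.Ioo (pP hccc hnsep y) (bP hccc hnsep y)) := by
  rw [Set.disjoint_left]
  intro z hzx hzy
  have hzy' : z ∈ Set.Ioo (aP hccc hnsep y) (bP hccc hnsep y) :=
    ⟨lt_trans (aP_lt_pP hccc hnsep y) hzy.1, hzy.2⟩
  have hzx' : z ∈ Set.Ioo (aP hccc hnsep x) (bP hccc hnsep x) :=
    ⟨lt_trans (aP_lt_pP hccc hnsep x) hzx.1, hzx.2⟩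
  have hsub := nested hccc hnsep hxy ⟨z, hzy', hzx'⟩
  rcases side hccc hnsep hxy hsub with hl | hr
  · exact absurd (hl hzy').2 (not_lt.2 (le_of_lt hzx.1))
  · exact hnc ⟨hxy, hr⟩

lemma sep_mono {a b c d u u' v : L} (hd : Set.Ioo a b ∩ Set.Ioo c d = ∅)
    (hu : u ∈ Set.Ioo a b) (hu' : u' ∈ Set.Ioo a b) (hv : v ∈ Set.Ioo c d)
    (huv : u < v) : u' < v := by
  by_contra hge
  push_neg at hge
  have hvm : v ∈ Set.Ioo a b := ⟨lt_trans hu.1 huv, lt_of_le_of_lt hge hu'.2⟩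
  have : v ∈ Set.Ioo a b ∩ Set.Ioo c d := ⟨hvm, hv⟩
  rw [hd] at this
  exact this

lemma sep_mono' {a b c d u u' v : L} (hd : Set.Ioo a b ∩ Set.Ioo c d = ∅)
    (hu : u ∈ Set.Ioo a b) (hu' : u' ∈ Set.Ioo a b) (hv : v ∈ Set.Ioo c d)
    (hvu : v < u) : v < u' := by
  by_contra hge
  push_neg at hge
  have hvm : v ∈ Set.Ioo a b := ⟨lt_of_lt_of_le hu'.1 hge, lt_trans hvu hu.2⟩
  have : v ∈ Set.Ioo a b ∩ Set.Ioo c d := ⟨hvm, hv⟩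
  rw [hd] at this
  exact this

lemma star {s t x y : Carrier} (hsx : s = x ∨ treeLT hccc hnsep s x)
    (hty : t = y ∨ treeLT hccc hnsep t y) (hst : idx s < idx t)
    (hnc : ¬ treeLT hccc hnsep s t) :
    (pP hccc hnsep s < pP hccc hnsep t → pP hccc hnsep x < pP hccc hnsep y) ∧
    (pP hccc hnsep t < pP hccc hnsep s → pP hccc hnsep y < pP hccc hnsep x) := by
  have hx1 : pP hccc hnsep x ∈ Set.Ioo (aP hccc hnsep s) (bP hccc hnsep s) ∧
      pP hccc hnsep s ≤ pP hccc hnsep x := by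
    rcases hsx with rfl | h
    · exact ⟨pP_mem hccc hnsep s, le_refl _⟩
    · have h2 := h.2 (pP_mem hccc hnsep x)
      exact ⟨⟨lt_trans (aP_lt_pP hccc hnsep s) h2.1, h2.2⟩, le_of_lt h2.1⟩
  have hy1 : pP hccc hnsep y ∈ Set.Ioo (aP hccc hnsep t) (bP hccc hnsep t) ∧
      pP hccc hnsep t ≤ pP hccc hnsep y := by
    rcases hty with rfl | h
    · exact ⟨pP_mem hccc hnsep t, le_refl _⟩
    · have h2 := h.2 (pP_mem hccc hnsep y)
      exact ⟨⟨lt_trans (aP_lt_pP hccc hnsep t) h2.1, h2.2⟩, le_of_lt h2.1⟩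
  by_cases hint : Set.Ioo (aP hccc hnsep t) (bP hccc hnsep t) ∩
      Set.Ioo (aP hccc hnsep s) (bP hccc hnsep s) = ∅
  · have hint' : Set.Ioo (aP hccc hnsep s) (bP hccc hnsep s) ∩
        Set.Ioo (aP hccc hnsep t) (bP hccc hnsep t) = ∅ := by
      rwa [Set.inter_comm]
    constructor
    · intro h
      have h1 : pP hccc hnsep x < pP hccc hnsep t :=
        sep_mono hint' (pP_mem hccc hnsep s) hx1.1 (pP_mem hccc hnsep t) h
      exact sep_mono' hint (pP_mem hccc hnsep t) hy1.1 hx1.1 h1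
    · intro h
      have h1 : pP hccc hnsep y < pP hccc hnsep s :=
        sep_mono hint (pP_mem hccc hnsep t) hy1.1 (pP_mem hccc hnsep s) h
      exact sep_mono' hint' (pP_mem hccc hnsep s) hx1.1 hy1.1 h1
  · have hsub := nested hccc hnsep hst (Set.nonempty_iff_ne_empty.2 hint)
    rcases side hccc hnsep hst hsub with hl | hr
    · have hyl : pP hccc hnsep y < pP hccc hnsep s := (hl hy1.1).2
      constructor
      · intro h
        have h2 : pP hccc hnsep t < pP hccc hnsep s := (hl (pP_mem hccc hnsep t)).2
        exact absurd h (not_lt.2 (le_of_lt h2))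
      · intro _
        exact lt_of_lt_of_le hyl hx1.2
    · exact absurd ⟨hst, hr⟩ hnc

end TreeOrder

/-! ### Chains and antichains of the tree order are countable -/

section ChainsAntichains

variable {L : Type} [LinearOrder L] (hccc : CCCOrder L) (hnsep : ¬ TopSeparable L)

lemma chain_countable (C : Set Carrier)
    (hC : ∀ x ∈ C, ∀ y ∈ C, x ≠ y → treeLT hccc hnsep x y ∨ treeLT hccc hnsep y x) :
    C.Countable := by
  by_contra hunc
  set X : Set L := (fun x => pP hccc hnsep x) '' C with hX
  have hXunc : ¬ X.Countable := fun h =>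
    hunc (Set.countable_of_injective_of_countable_image
      (fun a _ b _ hab => pP_inj hccc hnsep hab) h)
  have hwf : WellFounded ((· < ·) : X → X → Prop) := by
    set m : X → Ordinal.{0} := fun v => idx ((Set.mem_image _ _ _ |>.1 v.2).choose) with hm
    refine Subrelation.wf (r := InvImage (· < ·) m) ?_ (InvImage.wf m Ordinal.lt_wf)
    intro v w hvw
    obtain ⟨hv1, hv2⟩ := (Set.mem_image _ _ _ |>.1 v.2).choose_spec
    obtain ⟨hw1, hw2⟩ := (Set.mem_image _ _ _ |>.1 w.2).choose_spec
    have hlt : (v : L) < (w : L) := hvw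
    have hplt : pP hccc hnsep ((Set.mem_image _ _ _ |>.1 v.2).choose) <
        pP hccc hnsep ((Set.mem_image _ _ _ |>.1 w.2).choose) := by
      rw [hv2, hw2]; exact hlt
    have hne : (Set.mem_image _ _ _ |>.1 v.2).choose ≠
        (Set.mem_image _ _ _ |>.1 w.2).choose := fun h =>
      absurd hplt (by rw [h]; exact lt_irrefl _)
    rcases hC _ hv1 _ hw1 hne with h | h
    · exact h.1
    · exact absurd (treeLT_pP_lt hccc hnsep h) (not_lt.2 (le_of_lt hplt))
  exact hXunc (wellOrdered_countable hccc X hwf)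

lemma antichain_countable (A : Set Carrier)
    (hA : ∀ x ∈ A, ∀ y ∈ A, x ≠ y → ¬ treeLT hccc hnsep x y ∧ ¬ treeLT hccc hnsep y x) :
    A.Countable := by
  have hdisj : ∀ x ∈ A, ∀ y ∈ A, x ≠ y →
      Disjoint (Set.Ioo (pP hccc hnsep x) (bP hccc hnsep x))
        (Set.Ioo (pP hccc hnsep y) (bP hccc hnsep y)) := by
    intro x hx y hy hne
    rcases lt_trichotomy (idx x) (idx y) with h | h | h
    · exact half_disjoint hccc hnsep h (hA x hx y hy hne).1
    · exact absurd (idx_injective h) hne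
    · exact (half_disjoint hccc hnsep h (hA y hy x hx (Ne.symm hne)).1).symm
  have hinj : Set.InjOn (fun x => Set.Ioo (pP hccc hnsep x) (bP hccc hnsep x)) A := by
    intro x hx y hy he
    by_contra hne
    obtain ⟨w, hw⟩ := right_nonempty hccc hnsep x
    have hw' : w ∈ Set.Ioo (pP hccc hnsep y) (bP hccc hnsep y) := by
      have he' : Set.Ioo (pP hccc hnsep x) (bP hccc hnsep x) =
          Set.Ioo (pP hccc hnsep y) (bP hccc hnsep y) := he
      rwa [he'] at hw
    exact (Set.disjoint_left.1 (hdisj x hx y hy hne)) hw hw' 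
  apply Set.countable_of_injective_of_countable_image hinj
  apply hccc
  · rintro s ⟨x, _, rfl⟩
    exact ⟨⟨_, _, rfl⟩, right_nonempty hccc hnsep x⟩
  · rintro s ⟨x, hx, rfl⟩ t ⟨y, hy, rfl⟩ hne
    have hxy : x ≠ y := fun h => hne (by rw [h])
    exact hdisj x hx y hy hxy

end ChainsAntichains


/-- Every Suslin line contains an uncountable suborder which is order-isomorphic to a
lexicographically ordered Suslin tree `(S, <lex)`. -/
theorem suslinLine_contains_lexOrderedSuslinTree (L : Type) [LinearOrder L]
    (hccc : CCCOrder L) (hnsep : ¬ TopSeparable L) :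
    ∃ (S : Type) (ps : PartialOrder S) (hT : @IsSetTree S ps) (lo : S → S → Prop),
      @IsLevelOrderFamily S ps hT lo ∧ @IsSuslinTree S ps hT ∧
      ∃ (A : Set L) (f : A → S), ¬ A.Countable ∧ Function.Bijective f ∧
        ∀ x y : A, (x : L) < (y : L) ↔ @lexLT S ps hT lo (f x) (f y) := by
  classical
  letI ps : PartialOrder Carrier :=
    { le := fun x y => x = y ∨ treeLT hccc hnsep x y
      lt := treeLT hccc hnsep
      le_refl := fun x => Or.inl rfl
      le_trans := by
        rintro x y z (rfl | h1) h2
        · exact h2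
        · rcases h2 with rfl | h2
          · exact Or.inr h1
          · exact Or.inr (treeLT_trans hccc hnsep h1 h2)
      lt_iff_le_not_ge := by
        intro x y
        constructor
        · intro h
          refine ⟨Or.inr h, ?_⟩
          rintro (rfl | h')
          · exact absurd h.1 (lt_irrefl _)
          · exact absurd (lt_trans h.1 h'.1) (lt_irrefl _)
        · rintro ⟨rfl | h, hn⟩
          · exact absurd (Or.inl rfl) hn
          · exact h
      le_antisymm := by
        rintro x y (rfl | h1) h2
        · rfl
        · rcases h2 with rfl | h2
          · rfl
          · exact absurd (lt_trans h1.1 h2.1) (lt_irrefl (idx x)) }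
  have hT : IsSetTree Carrier := by
    intro t
    have htri : ∀ a b : {s : Carrier // s < t},
        (a : Carrier) < (b : Carrier) ∨ a = b ∨ (b : Carrier) < (a : Carrier) := by
      intro a b
      rcases lt_trichotomy (idx (a : Carrier)) (idx (b : Carrier)) with h | h | h
      · exact Or.inl (pred_lin hccc hnsep a.2 b.2 h)
      · exact Or.inr (Or.inl (Subtype.ext (idx_injective h)))
      · exact Or.inr (Or.inr (pred_lin hccc hnsep b.2 a.2 h))
    have hwf : WellFounded (fun a b : {s : Carrier // s < t} =>
        (a : Carrier) < (b : Carrier)) := by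
      refine Subrelation.wf (r := InvImage ((· < ·) : Ordinal.{0} → Ordinal.{0} → Prop)
        (fun a : {s : Carrier // s < t} => idx (a : Carrier))) ?_ (InvImage.wf _ Ordinal.lt_wf)
      intro a b hab
      exact hab.1
    exact { trichotomous := fun a b h1 h2 => ((htri a b).resolve_left h1).resolve_right h2
            toIsWellFounded := ⟨hwf⟩ }
  set lo : Carrier → Carrier → Prop :=
    fun s t => nodeHt hT s = nodeHt hT t ∧ pP hccc hnsep s < pP hccc hnsep t with hlo
  have hlevel : IsLevelOrderFamily hT lo := by
    refine ⟨fun s t h => h.1, fun t h => lt_irrefl _ h.2,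
      fun s t u h1 h2 => ⟨h1.1.trans h2.1, lt_trans h1.2 h2.2⟩, ?_⟩
    intro s t hne he
    rcases lt_or_gt_of_ne (fun h => hne (pP_inj hccc hnsep h)) with h | h
    · exact Or.inl ⟨he, h⟩
    · exact Or.inr ⟨he.symm, h⟩
  have hNoChain : NoUncountableChain Carrier := by
    intro C hchain
    apply chain_countable hccc hnsep C
    intro x hx y hy hne
    rcases hchain hx hy hne with h | h
    · rcases h with h' | h'
      · exact absurd h' hne
      · exact Or.inl h'
    · rcases h with h' | h'
      · exact absurd h'.symm hne
      · exact Or.inr h'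
  have hNoAnti : NoUncountableAntichain Carrier := by
    intro A hA
    apply antichain_countable hccc hnsep A
    intro x hx y hy hne
    obtain ⟨h1, h2⟩ := hA x hx y hy hne
    exact ⟨fun h => h1 (Or.inr h), fun h => h2 (Or.inr h)⟩
  have hHtlt : ∀ t : Carrier, nodeHt hT t < omega1 := by
    intro t
    have hcnt : {s : Carrier | s < t}.Countable := by
      apply chain_countable hccc hnsep
      intro x hx y hy hne
      rcases lt_trichotomy (idx x) (idx y) with h | h | h
      · exact Or.inl (pred_lin hccc hnsep hx hy h)
      · exact absurd (idx_injective h) hne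
      · exact Or.inr (pred_lin hccc hnsep hy hx h)
    rw [show (omega1 : Ordinal.{0}) = (Cardinal.aleph 1).ord from rfl, Cardinal.lt_ord]
    have hcard : (nodeHt hT t).card = Cardinal.mk {s : Carrier // s < t} :=
      @Ordinal.card_type _ _ (hT t)
    rw [hcard]
    exact lt_of_le_of_lt hcnt.le_aleph0 Cardinal.aleph0_lt_aleph_one
  have hLevelsCnt : ∀ α : Ordinal, {t : Carrier | nodeHt hT t = α}.Countable := by
    intro α
    apply antichain_countable hccc hnsep
    intro x hx y hy hne
    rw [Set.mem_setOf_eq] at hx hy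
    have hxy : nodeHt hT x = nodeHt hT y := by rw [hx, hy]
    constructor
    · intro h
      exact absurd hxy (ne_of_lt (nodeHt_lt_of_lt hT (show x < y from h)))
    · intro h
      exact absurd hxy.symm (ne_of_lt (nodeHt_lt_of_lt hT (show y < x from h)))
  have hSurj : ∀ α : Ordinal, α < omega1 → ∃ t : Carrier, nodeHt hT t = α := by
    by_contra hno
    push_neg at hno
    obtain ⟨α, hα, hnone⟩ := hno
    have hall : ∀ t : Carrier, nodeHt hT t < α := by
      intro t
      rcases lt_trichotomy (nodeHt hT t) α with h | h | h
      · exact h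
      · exact absurd h (hnone t)
      · obtain ⟨s, _, hs⟩ := exists_nodeHt_eq_of_lt hT h
        exact absurd hs (hnone s)
    haveI : Countable α.ToType := by
      rw [← Cardinal.mk_le_aleph0_iff, Cardinal.mk_toType]
      have h2 := Cardinal.lt_ord.1 hα
      rwa [← Cardinal.succ_aleph0, Order.lt_succ_iff] at h2
    apply carrier_uncountable
    have hcover : (Set.univ : Set Carrier) ⊆
        ⋃ μ : α.ToType, {t : Carrier | nodeHt hT t = otyp μ} := by
      intro t _
      refine Set.mem_iUnion.2 ⟨oenum (nodeHt hT t) (hall t), ?_⟩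
      rw [Set.mem_setOf_eq, otyp_oenum]
    exact Set.Countable.mono hcover (Set.countable_iUnion fun μ => hLevelsCnt (otyp μ))
  have master : ∀ γ δ : Carrier,
      (pP hccc hnsep γ < pP hccc hnsep δ ↔ lexLT hT lo γ δ) := by
    intro γ δ
    by_cases heq : γ = δ
    · subst heq
      constructor
      · intro h
        exact absurd h (lt_irrefl _)
      · rintro (h | ⟨hinc, _⟩)
        · exact absurd h.1 (lt_irrefl _)
        · exact absurd (Or.inl rfl) hinc.1
    by_cases h1 : treeLT hccc hnsep γ δ
    · exact ⟨fun _ => Or.inl h1, fun _ => treeLT_pP_lt hccc hnsep h1⟩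
    by_cases h2 : treeLT hccc hnsep δ γ
    · constructor
      · intro h
        exact absurd (lt_trans h (treeLT_pP_lt hccc hnsep h2)) (lt_irrefl _)
      · rintro (h | ⟨hinc, _⟩)
        · exact absurd h h1
        · exact absurd (Or.inr h2) hinc.2
    have hinc : Incomp (T := Carrier) γ δ := by
      constructor
      · rintro (rfl | h)
        exacts [heq rfl, h1 h]
      · rintro (h | h)
        exacts [heq h.symm, h2 h]
    have hsγ := restr_spec hT (delta_le_left hT hinc)
    have htδ := restr_spec hT (delta_le_right hT hinc)
    set s' := restr hT γ (delta hT γ δ) with hs'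
    set t' := restr hT δ (delta hT γ δ) with ht'
    have hne' : s' ≠ t' := delta_restr_ne hT hinc
    have hht : nodeHt hT s' = nodeHt hT t' := by rw [hsγ.2, htδ.2]
    have hpne : pP hccc hnsep s' ≠ pP hccc hnsep t' := fun h => hne' (pP_inj hccc hnsep h)
    have himp : (pP hccc hnsep s' < pP hccc hnsep t' →
        pP hccc hnsep γ < pP hccc hnsep δ) ∧
        (pP hccc hnsep t' < pP hccc hnsep s' →
        pP hccc hnsep δ < pP hccc hnsep γ) := by
      have hidne : idx s' ≠ idx t' := fun h => hne' (idx_injective h)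
      have hsle : s' = γ ∨ treeLT hccc hnsep s' γ := hsγ.1
      have htle : t' = δ ∨ treeLT hccc hnsep t' δ := htδ.1
      rcases lt_or_gt_of_ne hidne with h | h
      · have hnc : ¬ treeLT hccc hnsep s' t' := fun hc =>
          absurd hht (ne_of_lt (nodeHt_lt_of_lt hT (show s' < t' from hc)))
        exact star hccc hnsep hsle htle h hnc
      · have hnc : ¬ treeLT hccc hnsep t' s' := fun hc =>
          absurd hht.symm (ne_of_lt (nodeHt_lt_of_lt hT (show t' < s' from hc)))
        have hss := star hccc hnsep htle hsle h hnc
        exact ⟨hss.2, hss.1⟩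
    have hiff : (pP hccc hnsep γ < pP hccc hnsep δ) ↔
        (pP hccc hnsep s' < pP hccc hnsep t') := by
      constructor
      · intro h
        by_contra hnlt
        rcases lt_or_gt_of_ne hpne with hl | hg
        · exact hnlt hl
        · exact absurd (himp.2 hg) (not_lt.2 (le_of_lt h))
      · exact himp.1
    rw [hiff]
    constructor
    · intro h
      exact Or.inr ⟨hinc, hht, h⟩
    · rintro (h | ⟨_, _, h⟩)
      · exact absurd h h1
      · exact h
  refine ⟨Carrier, ps, hT, lo, hlevel, ⟨⟨hHtlt, hSurj, hLevelsCnt⟩, hNoChain, hNoAnti⟩, ?_⟩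
  set A : Set L := Set.range (fun x : Carrier => pP hccc hnsep x) with hA
  have hmem : ∀ v : A, ∃ x : Carrier, pP hccc hnsep x = (v : L) := fun v => v.2
  have hf : ∀ v : A, pP hccc hnsep ((hmem v).choose) = (v : L) := fun v => (hmem v).choose_spec
  refine ⟨A, fun v => (hmem v).choose, ?_, ⟨?_, ?_⟩, ?_⟩
  · intro h
    rw [Cardinal.countable_iff_lt_aleph_one] at h
    have hmk : Cardinal.mk A = Cardinal.mk Carrier :=
      Cardinal.mk_range_eq _ (fun a b hab => pP_inj hccc hnsep hab)
    rw [hmk, mk_carrier] at h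
    exact lt_irrefl _ h
  · intro v w hvw
    have hvw' : (hmem v).choose = (hmem w).choose := hvw
    apply Subtype.ext
    rw [← hf v, ← hf w, hvw']
  · intro x
    refine ⟨⟨pP hccc hnsep x, ⟨x, rfl⟩⟩, ?_⟩
    show (hmem ⟨pP hccc hnsep x, ⟨x, rfl⟩⟩).choose = x
    apply pP_inj hccc hnsep
    rw [hf]
  · intro v w
    rw [← hf v, ← hf w]
    exact master _ _


end
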